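/- arXiv:2204.09926 — 3 statements merged into one kernel-verified Lean document; each statement's English description precedes it below -/
import Mathlib

section
/- Let P be a dcpo with Scott topology, C(P) its lattice of nonempty Scott-closed subsets ordered by inclusion, and LP = {↓F : F nonempty finite ⊆ P} ⊆ C(P). Then the relative Scott topology σ(C(P))|_{LP} is contained in the ⇒_L-convergence topology O_{⇒L}(LP). Moreover σ(C(P))|_{LP} = O_{⇒L}(LP) if and only if for every 𝒱 ∈ O_{⇒L}(LP), the set ↑_{C(P)}𝒱 = {A ∈ C(P) : ∃ ↓F ∈ 𝒱, ↓F ⊆ A} is Scott open in C(P). -/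
variable {X : Type*}

/-- The specialization order: `x ⊑ y` iff `x ∈ closure {y}`. -/
def sle [TopologicalSpace X] (x y : X) : Prop := x ∈ closure {y}

/-- A directed subset with respect to the specialization order. -/
def IsDirSet [TopologicalSpace X] (D : Set X) : Prop :=
  D.Nonempty ∧ ∀ a ∈ D, ∀ b ∈ D, ∃ c ∈ D, sle a c ∧ sle b c

/-- `DConv D x`: the directed set `D`, viewed as a net (indexed by itself with
the specialization order), converges to `x`. -/
def DConv [TopologicalSpace X] (D : Set X) (x : X) : Prop :=
  IsDirSet D ∧ ∀ U : Set X, IsOpen U → x ∈ U → ∃ d ∈ D, ∀ e ∈ D, sle d e → e ∈ U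

/-- Directed open set. -/
def DOpen [TopologicalSpace X] (U : Set X) : Prop :=
  ∀ D : Set X, ∀ x : X, DConv D x → x ∈ U → (D ∩ U).Nonempty

/-- A directed space: every directed open set is open. -/
def IsDirectedSpace (X : Type*) [TopologicalSpace X] : Prop :=
  ∀ U : Set X, DOpen U → IsOpen U

/-- Down-closure with respect to the specialization order. -/
def dcl [TopologicalSpace X] (F : Set X) : Set X := {x | ∃ a ∈ F, sle x a}

/-- Membership in `LX`: down-closures of nonempty finite sets. -/
def InLX [TopologicalSpace X] (A : Set X) : Prop :=
  ∃ F : Finset X, F.Nonempty ∧ A = dcl (F : Set X)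

/-- A directed (under inclusion) family of elements of `LX`. -/
def LDir [TopologicalSpace X] (𝒟 : Set (Set X)) : Prop :=
  (∀ B ∈ 𝒟, InLX B) ∧ 𝒟.Nonempty ∧ ∀ A ∈ 𝒟, ∀ B ∈ 𝒟, ∃ C ∈ 𝒟, A ⊆ C ∧ B ⊆ C

/-- The convergence `𝒟 ⇒_L ↓F`. -/
def LConv [TopologicalSpace X] (𝒟 : Set (Set X)) (A : Set X) : Prop :=
  LDir 𝒟 ∧ ∃ F : Finset X, F.Nonempty ∧ A = dcl (F : Set X) ∧
    ∀ a ∈ F, ∃ D : Set X, D ⊆ ⋃₀ 𝒟 ∧ DConv D a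

/-- `⇒_L`-convergence open subsets of `LX`. -/
def LOpen [TopologicalSpace X] (𝒰 : Set (Set X)) : Prop :=
  (∀ A ∈ 𝒰, InLX A) ∧ ∀ 𝒟 A, LConv 𝒟 A → A ∈ 𝒰 → (𝒟 ∩ 𝒰).Nonempty

/-- Scott-open subsets of a preordered set. -/
def ScottOpens [Preorder X] (U : Set X) : Prop :=
  IsUpperSet U ∧ ∀ D : Set X, D.Nonempty → DirectedOn (· ≤ ·) D →
    ∀ a, IsLUB D a → a ∈ U → (D ∩ U).Nonempty

/-- Scott-closed subsets. -/
def ScottClosedSet [Preorder X] (A : Set X) : Prop :=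
  IsLowerSet A ∧ ∀ D : Set X, D ⊆ A → D.Nonempty → DirectedOn (· ≤ ·) D →
    ∀ a, IsLUB D a → a ∈ A

/-- Nonempty Scott-closed set (element of `C(P)`). -/
def IsCl [Preorder X] (A : Set X) : Prop := A.Nonempty ∧ ScottClosedSet A

/-- `S` is the least upper bound in `C(P)` (ordered by inclusion) of the family `𝒟`. -/
def IsLubCl [Preorder X] (𝒟 : Set (Set X)) (S : Set X) : Prop :=
  IsCl S ∧ (∀ A ∈ 𝒟, A ⊆ S) ∧ ∀ T, IsCl T → (∀ A ∈ 𝒟, A ⊆ T) → S ⊆ T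

/-- Scott-open family of nonempty Scott-closed sets, i.e. Scott-open subsets of `C(P)`. -/
def SOC [Preorder X] (𝒲 : Set (Set X)) : Prop :=
  (∀ A ∈ 𝒲, IsCl A) ∧
  (∀ A B, A ∈ 𝒲 → IsCl B → A ⊆ B → B ∈ 𝒲) ∧
  ∀ 𝒟 S, (∀ A ∈ 𝒟, IsCl A) → 𝒟.Nonempty → DirectedOn (· ⊆ ·) 𝒟 →
    IsLubCl 𝒟 S → S ∈ 𝒲 → (𝒟 ∩ 𝒲).Nonempty

/-- The way-below relation. -/
def wayBelow [Preorder X] (y x : X) : Prop :=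
  ∀ D : Set X, D.Nonempty → DirectedOn (· ≤ ·) D → ∀ a, IsLUB D a → x ≤ a → ∃ d ∈ D, y ≤ d

/-- A continuous domain: a dcpo in which every element is the directed supremum
of the elements way below it. -/
def IsContinuousDomain (X : Type*) [Preorder X] : Prop :=
  (∀ D : Set X, D.Nonempty → DirectedOn (· ≤ ·) D → ∃ a, IsLUB D a) ∧
  ∀ x : X, {y | wayBelow y x}.Nonempty ∧ DirectedOn (· ≤ ·) {y | wayBelow y x} ∧
    IsLUB {y | wayBelow y x} x


section Aux

variable {P : Type*} [PartialOrder P] [TopologicalSpace P]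

lemma sle_refl' (x : X) [TopologicalSpace X] : sle x x := subset_closure rfl

lemma myClosed_iff (hscott : ∀ U : Set P, IsOpen U ↔ ScottOpens U) (C : Set P) :
    IsClosed C ↔ ScottClosedSet C := by
  rw [← isOpen_compl_iff, hscott]
  constructor
  · rintro ⟨hu, hd⟩
    refine ⟨fun a b hba ha => ?_, fun D hDC hne hdir a hlub => ?_⟩
    · by_contra hb
      exact hb (by_contra fun h => (hu hba h) ha)
    · by_contra h
      obtain ⟨d, hdD, hdc⟩ := hd D hne hdir a hlub h
      exact hdc (hDC hdD)
  · rintro ⟨hl, hd⟩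
    refine ⟨fun a b hab ha hb => ha (hl hab hb), fun D hne hdir a hlub hac => ?_⟩
    by_contra h
    have hDC : D ⊆ C := fun d hdD => by_contra fun hdc => h ⟨d, hdD, hdc⟩
    exact hac (hd D hDC hne hdir a hlub)

lemma sle_iff (hscott : ∀ U : Set P, IsOpen U ↔ ScottOpens U) {x y : P} :
    sle x y ↔ x ≤ y := by
  constructor
  · intro h
    have hcl : IsClosed {z : P | z ≤ y} := (myClosed_iff hscott _).mpr
      ⟨fun a b hba ha => le_trans hba ha,
       fun D hD _ _ a ha => ha.2 fun d hd => hD hd⟩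
    exact closure_minimal (by simp) hcl h
  · intro h
    exact ((myClosed_iff hscott _).mp isClosed_closure).1 h (subset_closure rfl)

lemma dir_finset_le {D : Set P} (hdir : DirectedOn (· ≤ ·) D) (hne : D.Nonempty)
    (s : Finset P) (hs : ↑s ⊆ D) : ∃ u ∈ D, ∀ x ∈ s, x ≤ u := by
  classical
  induction s using Finset.induction with
  | empty => exact ⟨hne.choose, hne.choose_spec, by simp⟩
  | @insert a t _ ih =>
    have hts : (↑t : Set P) ⊆ D :=
      subset_trans (Finset.coe_subset.mpr (Finset.subset_insert a t)) hs
    obtain ⟨u, huD, hu⟩ := ih hts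
    have haD : a ∈ D := hs (by simp)
    obtain ⟨c, hcD, hac, huc⟩ := hdir a haD u huD
    refine ⟨c, hcD, fun x hx => ?_⟩
    rcases Finset.mem_insert.mp hx with rfl | hx
    · exact hac
    · exact le_trans (hu x hx) huc

lemma isCl_dcl (hscott : ∀ U : Set P, IsOpen U ↔ ScottOpens U) {F : Finset P}
    (hF : F.Nonempty) : IsCl (dcl (F : Set P)) := by
  classical
  obtain ⟨a₀, ha₀⟩ := hF
  refine ⟨⟨a₀, a₀, by exact_mod_cast ha₀, sle_refl' a₀⟩, ?_, ?_⟩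
  · rintro x y hxy ⟨g, hg, hyg⟩
    exact ⟨g, hg, (sle_iff hscott).mpr (le_trans hxy ((sle_iff hscott).mp hyg))⟩
  · intro D hD hne hdir c hlub
    by_cases hcase : ∃ g ∈ F, ∀ d ∈ D, d ≤ g
    · obtain ⟨g, hg, hall⟩ := hcase
      exact ⟨g, hg, (sle_iff hscott).mpr (hlub.2 hall)⟩
    · exfalso
      push_neg at hcase
      choose f hf1 hf2 using hcase
      set s : Finset P := F.attach.image (fun g => f g.1 g.2) with hs
      have hsD : (↑s : Set P) ⊆ D := by
        intro x hx
        simp only [hs, Finset.coe_image, Set.mem_image, Finset.mem_coe,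
          Finset.mem_attach, true_and] at hx
        obtain ⟨g, _, rfl⟩ := hx
        exact hf1 g.1 g.2
      obtain ⟨u, huD, hu⟩ := dir_finset_le hdir hne s hsD
      obtain ⟨g₀, hg₀, hug₀⟩ := hD huD
      have hfle : f g₀ hg₀ ≤ u := hu _ (Finset.mem_image.mpr ⟨⟨g₀, hg₀⟩, Finset.mem_attach _ _, rfl⟩)
      exact hf2 g₀ hg₀ (le_trans hfle (le_trans (le_refl u) ((sle_iff hscott).mp hug₀)))

lemma dconv_mem_closure {D : Set P} {x : P} (h : DConv D x) : x ∈ closure D := by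
  rw [mem_closure_iff]
  intro U hU hxU
  obtain ⟨d, hdD, hd⟩ := h.2 U hU hxU
  exact ⟨d, hd d hdD (sle_refl' d), hdD⟩

lemma mem_up (hscott : ∀ U : Set P, IsOpen U ↔ ScottOpens U) {𝒲 : Set (Set P)}
    (h𝒲 : SOC 𝒲) {S : Set P} (hS : IsCl S) (hS𝒲 : S ∈ 𝒲) :
    ∃ B, B ∈ 𝒲 ∧ InLX B ∧ B ⊆ S := by
  classical
  set ℱ : Set (Set P) := {B | ∃ F : Finset P, F.Nonempty ∧ ↑F ⊆ S ∧ B = dcl (↑F : Set P)}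
    with hℱ
  have hCl : ∀ B ∈ ℱ, IsCl B := by
    rintro B ⟨F, hFne, _, rfl⟩
    exact isCl_dcl hscott hFne
  have hBsub : ∀ B ∈ ℱ, B ⊆ S := by
    rintro B ⟨F, hFne, hFS, rfl⟩
    rintro x ⟨g, hg, hxg⟩
    exact hS.2.1 ((sle_iff hscott).mp hxg) (hFS hg)
  obtain ⟨x₀, hx₀⟩ := hS.1
  have hmem0 : dcl (↑({x₀} : Finset P) : Set P) ∈ ℱ :=
    ⟨{x₀}, Finset.singleton_nonempty x₀, by simpa using hx₀, rfl⟩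
  have hdir : DirectedOn (· ⊆ ·) ℱ := by
    rintro B₁ ⟨F₁, h₁, hFS₁, rfl⟩ B₂ ⟨F₂, h₂, hFS₂, rfl⟩
    refine ⟨dcl (↑(F₁ ∪ F₂) : Set P), ⟨F₁ ∪ F₂, h₁.inl, by
      simp only [Finset.coe_union]; exact Set.union_subset hFS₁ hFS₂, rfl⟩, ?_, ?_⟩
    · rintro x ⟨g, hg, hxg⟩
      exact ⟨g, by simp only [Finset.coe_union]; exact Set.mem_union_left _ hg, hxg⟩
    · rintro x ⟨g, hg, hxg⟩
      exact ⟨g, by simp only [Finset.coe_union]; exact Set.mem_union_right _ hg, hxg⟩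
  have hlub : IsLubCl ℱ S := by
    refine ⟨hS, hBsub, fun T hT hTub => fun x hx => ?_⟩
    have hmem : dcl (↑({x} : Finset P) : Set P) ∈ ℱ :=
      ⟨{x}, Finset.singleton_nonempty x, by simpa using hx, rfl⟩
    exact hTub _ hmem ⟨x, by simp, sle_refl' x⟩
  obtain ⟨B, hBℱ, hB𝒲⟩ := h𝒲.2.2 ℱ S hCl ⟨_, hmem0⟩ hdir hlub hS𝒲
  obtain ⟨F, hFne, hFS, rfl⟩ := hBℱ
  exact ⟨_, hB𝒲, ⟨F, hFne, rfl⟩, hBsub _ ⟨F, hFne, hFS, rfl⟩⟩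

end Aux

set_option maxHeartbeats 800000 in
/-- for a dcpo `P` with the Scott topology, the relative Scott
topology of `C(P)` on `LP` is contained in the `⇒_L`-topology, with equality iff
`↑_{C(P)}𝒱` is Scott open for every `⇒_L`-open `𝒱`. -/
theorem stmt_13 {P : Type*} [PartialOrder P] [TopologicalSpace P]
    (hscott : ∀ U : Set P, IsOpen U ↔ ScottOpens U)
    (hdcpo : ∀ D : Set P, D.Nonempty → DirectedOn (· ≤ ·) D → ∃ a, IsLUB D a) :
    (∀ 𝒲 : Set (Set P), SOC 𝒲 → LOpen {A | A ∈ 𝒲 ∧ InLX A}) ∧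
    ((∀ 𝒱 : Set (Set P), LOpen 𝒱 → ∃ 𝒲, SOC 𝒲 ∧ 𝒱 = {A | A ∈ 𝒲 ∧ InLX A}) ↔
      (∀ 𝒱 : Set (Set P), LOpen 𝒱 → SOC {A | IsCl A ∧ ∃ B ∈ 𝒱, B ⊆ A})) := by
  have part1 : ∀ 𝒲 : Set (Set P), SOC 𝒲 → LOpen {A | A ∈ 𝒲 ∧ InLX A} := by
    intro 𝒲 h𝒲
    refine ⟨fun A hA => hA.2, ?_⟩
    rintro 𝒟 A ⟨hDir, F, hFne, hAF, hconv⟩ ⟨hA𝒲, hALX⟩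
    obtain ⟨hLX, ⟨B₀, hB₀⟩, hdir⟩ := hDir
    set S := closure (⋃₀ 𝒟) with hS
    have hSclosed : ScottClosedSet S := (myClosed_iff hscott _).mp isClosed_closure
    have hIsClmem : ∀ B ∈ 𝒟, IsCl B := by
      intro B hB
      obtain ⟨G, hGne, rfl⟩ := hLX B hB
      exact isCl_dcl hscott hGne
    have hSne : S.Nonempty := by
      obtain ⟨x, hx⟩ := (hIsClmem B₀ hB₀).1
      exact ⟨x, subset_closure ⟨B₀, hB₀, hx⟩⟩
    have hsub : ∀ B ∈ 𝒟, B ⊆ S := fun B hB =>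
      subset_trans (fun x hx => Set.mem_sUnion.mpr ⟨B, hB, hx⟩) subset_closure
    have hlub : IsLubCl 𝒟 S := ⟨⟨hSne, hSclosed⟩, hsub, fun T hT hTub =>
      closure_minimal (Set.sUnion_subset hTub) ((myClosed_iff hscott T).mpr hT.2)⟩
    have hAS : A ⊆ S := by
      rw [hAF]
      rintro x ⟨a, haF, hxa⟩
      have haS : a ∈ S := by
        obtain ⟨D, hDsub, hDconv⟩ := hconv a haF
        exact closure_mono hDsub (dconv_mem_closure hDconv)
      exact hSclosed.1 ((sle_iff hscott).mp hxa) haS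
    have hS𝒲 : S ∈ 𝒲 := h𝒲.2.1 A S hA𝒲 ⟨hSne, hSclosed⟩ hAS
    obtain ⟨B, hB𝒟, hB𝒲⟩ := h𝒲.2.2 𝒟 S hIsClmem ⟨B₀, hB₀⟩ hdir hlub hS𝒲
    exact ⟨B, hB𝒟, hB𝒲, hLX B hB𝒟⟩
  refine ⟨part1, ?_, ?_⟩
  · intro hcond 𝒱 h𝒱
    obtain ⟨𝒲, h𝒲, h𝒱eq⟩ := hcond 𝒱 h𝒱
    have heq : {A | IsCl A ∧ ∃ B ∈ 𝒱, B ⊆ A} = 𝒲 := by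
      ext A
      constructor
      · rintro ⟨hA, B, hB𝒱, hBA⟩
        rw [h𝒱eq] at hB𝒱
        exact h𝒲.2.1 B A hB𝒱.1 hA hBA
      · intro hA𝒲
        obtain ⟨B, hB𝒲, hBLX, hBS⟩ := mem_up hscott h𝒲 (h𝒲.1 A hA𝒲) hA𝒲
        exact ⟨h𝒲.1 A hA𝒲, B, by rw [h𝒱eq]; exact ⟨hB𝒲, hBLX⟩, hBS⟩
    rw [heq]
    exact h𝒲
  · intro hcond 𝒱 h𝒱
    refine ⟨{A | IsCl A ∧ ∃ B ∈ 𝒱, B ⊆ A}, hcond 𝒱 h𝒱, ?_⟩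
    ext A
    constructor
    · intro hA𝒱
      obtain ⟨F, hFne, hAF⟩ := h𝒱.1 A hA𝒱
      exact ⟨⟨hAF ▸ isCl_dcl hscott hFne, A, hA𝒱, subset_rfl⟩, F, hFne, hAF⟩
    · rintro ⟨⟨hAcl, B, hB𝒱, hBA⟩, hALX⟩
      obtain ⟨G, hGne, hBG⟩ := h𝒱.1 B hB𝒱
      have hconv : LConv {A} B := by
        refine ⟨⟨?_, ⟨A, rfl⟩, ?_⟩, G, hGne, hBG, ?_⟩
        · intro C hC
          rw [Set.mem_singleton_iff] at hC
          rw [hC]; exact hALX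
        · intro C hC C' hC'
          rw [Set.mem_singleton_iff] at hC hC'
          exact ⟨A, rfl, by rw [hC], by rw [hC']⟩
        · intro a haG
          have haB : a ∈ B := hBG ▸ ⟨a, by exact_mod_cast haG, sle_refl' a⟩
          refine ⟨{a}, ?_, ⟨⟨a, rfl⟩, ?_⟩, ?_⟩
          · intro x hx
            rw [Set.mem_singleton_iff] at hx
            rw [hx]
            exact Set.mem_sUnion.mpr ⟨A, rfl, hBA haB⟩
          · intro p hp q hq
            rw [Set.mem_singleton_iff] at hp hq
            exact ⟨a, rfl, by rw [hp]; exact sle_refl' a, by rw [hq]; exact sle_refl' a⟩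
          · intro U hU haU
            refine ⟨a, rfl, fun e he _ => ?_⟩
            rw [Set.mem_singleton_iff] at he
            rw [he]; exact haU
      obtain ⟨C, hC1, hC2⟩ := h𝒱.2 {A} B hconv hB𝒱
      rw [Set.mem_singleton_iff] at hC1
      rwa [hC1] at hC2
end

section
/- Let X be a continuous domain with Scott topology, and UX = {↑F : F nonempty finite ⊆ X} ordered by reverse inclusion. Then for every directed family ℱ ⊆ UX and ↑F ∈ UX, one has ℱ ⇒_U ↑F if and only if ⋂{↑G : ↑G ∈ ℱ} ⊆ ↑F. -/
variable {X : Type*}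

/-- Up-closure with respect to the specialization order. -/
def ucl [TopologicalSpace X] (F : Set X) : Set X := {x | ∃ a ∈ F, sle a x}

/-- Membership in `UX`: up-closures of nonempty finite sets. -/
def InUX [TopologicalSpace X] (A : Set X) : Prop :=
  ∃ F : Finset X, F.Nonempty ∧ A = ucl (F : Set X)

/-- A family of elements of `UX`, directed with respect to reverse inclusion. -/
def UDir [TopologicalSpace X] (ℱ : Set (Set X)) : Prop :=
  (∀ B ∈ ℱ, InUX B) ∧ ℱ.Nonempty ∧ ∀ A ∈ ℱ, ∀ B ∈ ℱ, ∃ C ∈ ℱ, C ⊆ A ∧ C ⊆ B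

/-- The convergence `ℱ ⇒_U ↑F`. -/
def UConv [TopologicalSpace X] (ℱ : Set (Set X)) (A : Set X) : Prop :=
  UDir ℱ ∧ ∃ F : Finset X, F.Nonempty ∧ A = ucl (F : Set X) ∧
    ∃ (n : ℕ) (D : Fin n → Set X),
      (∀ i, ∃ a ∈ F, DConv (D i) a) ∧
      (∀ a ∈ F, ∃ i, DConv (D i) a) ∧
      (∀ d : Fin n → X, (∀ i, d i ∈ D i) → ∃ B ∈ ℱ, B ⊆ ⋃ i, ucl {d i})

/-- `⇒_U`-convergence open subsets of `UX`. -/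
def UOpen [TopologicalSpace X] (𝒰 : Set (Set X)) : Prop :=
  (∀ A ∈ 𝒰, InUX A) ∧ ∀ ℱ A, UConv ℱ A → A ∈ 𝒰 → (ℱ ∩ 𝒰).Nonempty

section AuxLemmas

variable {P : Type*} [PartialOrder P] [TopologicalSpace P]

lemma notLe_scottOpens (x : P) : ScottOpens {z : P | ¬ z ≤ x} := by
  constructor
  · intro a b hab ha hb
    exact ha (hab.trans hb)
  · intro D hne hdir a hlub ha
    by_contra h
    rw [Set.not_nonempty_iff_eq_empty] at h
    refine ha (hlub.2 ?_)
    intro d hd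
    by_contra hdx
    exact (h ▸ (Set.mem_inter hd hdx) : d ∈ (∅ : Set P))

lemma wayBelow_le' {y x : P} (h : wayBelow y x) : y ≤ x := by
  obtain ⟨d, hd, hyd⟩ := h {x} ⟨x, rfl⟩
    (fun a ha b hb => ⟨x, rfl, le_of_eq ha, le_of_eq hb⟩) x isLUB_singleton le_rfl
  rw [Set.mem_singleton_iff] at hd
  exact hd ▸ hyd

lemma wayBelow_mono {y' y x x' : P} (hy : y' ≤ y) (h : wayBelow y x) (hx : x ≤ x') :
    wayBelow y' x' := fun D hne hdir a hlub hle =>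
  (h D hne hdir a hlub (hx.trans hle)).imp fun d hd => ⟨hd.1, hy.trans hd.2⟩

lemma interp (hcont : IsContinuousDomain P) {y x : P} (h : wayBelow y x) :
    ∃ z, wayBelow y z ∧ wayBelow z x := by
  set E := {w : P | ∃ z, wayBelow w z ∧ wayBelow z x} with hE
  have hEne : E.Nonempty := by
    obtain ⟨z, hz⟩ := (hcont.2 x).1
    obtain ⟨w, hw⟩ := (hcont.2 z).1
    exact ⟨w, z, hw, hz⟩
  have hEdir : DirectedOn (· ≤ ·) E := by
    rintro w₁ ⟨z₁, hw₁, hz₁⟩ w₂ ⟨z₂, hw₂, hz₂⟩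
    obtain ⟨z₃, hz₃, h13, h23⟩ := (hcont.2 x).2.1 z₁ hz₁ z₂ hz₂
    obtain ⟨w₃, hw₃, h1, h2⟩ := (hcont.2 z₃).2.1 w₁ (wayBelow_mono le_rfl hw₁ h13)
      w₂ (wayBelow_mono le_rfl hw₂ h23)
    exact ⟨w₃, ⟨z₃, hw₃, hz₃⟩, h1, h2⟩
  have hElub : IsLUB E x := by
    constructor
    · rintro w ⟨z, hwz, hzx⟩
      exact (wayBelow_le' hwz).trans (wayBelow_le' hzx)
    · intro u hu
      have hz : ∀ z, wayBelow z x → z ≤ u := by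
        intro z hz
        exact (hcont.2 z).2.2.2 (fun w hw => hu ⟨z, hw, hz⟩)
      exact (hcont.2 x).2.2.2 (fun z hzx => hz z hzx)
  obtain ⟨w, hwE, hyw⟩ := h E hEne hEdir x hElub le_rfl
  obtain ⟨z, hwz, hzx⟩ := hwE
  exact ⟨z, wayBelow_mono hyw hwz le_rfl, hzx⟩

lemma upup_scottOpens (hcont : IsContinuousDomain P) (y : P) :
    ScottOpens {z : P | wayBelow y z} := by
  constructor
  · intro a b hab ha
    exact wayBelow_mono le_rfl ha hab
  · intro D hne hdir a hlub ha
    obtain ⟨z, hyz, hza⟩ := interp hcont ha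
    obtain ⟨d, hdD, hzd⟩ := hza D hne hdir a hlub le_rfl
    exact ⟨d, hdD, wayBelow_mono le_rfl hyz hzd⟩

lemma dconv_waybelow (hscott : ∀ U : Set P, IsOpen U ↔ ScottOpens U)
    (hcont : IsContinuousDomain P) (a : P) : DConv {y : P | wayBelow y a} a := by
  have hdir := (hcont.2 a).2.1
  have hne := (hcont.2 a).1
  refine ⟨⟨hne, ?_⟩, ?_⟩
  · intro u hu v hv
    obtain ⟨c, hc, huc, hvc⟩ := hdir u hu v hv
    exact ⟨c, hc, (sle_iff hscott).2 huc, (sle_iff hscott).2 hvc⟩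
  · intro U hU ha
    obtain ⟨d, hdD, hdU⟩ := ((hscott U).1 hU).2 _ hne hdir a (hcont.2 a).2.2 ha
    exact ⟨d, hdD, fun e _ hde => ((hscott U).1 hU).1 ((sle_iff hscott).1 hde) hdU⟩

/-- The key compactness lemma (via Rudin's lemma): if a directed family from `UX`
has intersection inside an open set, some member is inside it. -/
lemma rudin (hscott : ∀ U : Set P, IsOpen U ↔ ScottOpens U)
    (hdcpo : ∀ D : Set P, D.Nonempty → DirectedOn (· ≤ ·) D → ∃ a, IsLUB D a)
    (ℱ : Set (Set P)) (hF : UDir ℱ) {U : Set P} (hU : IsOpen U)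
    (h : ⋂₀ ℱ ⊆ U) : ∃ B ∈ ℱ, B ⊆ U := by
  by_contra hcon
  push_neg at hcon
  choose G hGne hGeq using fun B : ℱ => hF.1 B.1 B.2
  have hupper : IsUpperSet U := ((hscott U).1 hU).1
  set H : ℱ → Set P := fun B => (↑(G B) : Set P) \ U with hH
  have hslerefl : ∀ z : P, sle z z := fun z => subset_closure rfl
  have hHne : ∀ B : ℱ, (H B).Nonempty := by
    intro B
    by_contra hemp
    rw [Set.not_nonempty_iff_eq_empty] at hemp
    refine hcon B.1 B.2 ?_
    intro x hx
    rw [hGeq B] at hx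
    obtain ⟨a, haG, hax⟩ := hx
    have haU : a ∈ U := by
      by_contra haU
      exact (hemp ▸ (⟨haG, haU⟩ : a ∈ H B) : a ∈ (∅ : Set P))
    exact hupper ((sle_iff hscott).1 hax) haU
  have hkey : ∀ B B' : ℱ, B'.1 ⊆ B.1 → ∀ x ∈ H B', ∃ f ∈ H B, f ≤ x := by
    intro B B' hsub x hx
    have hx1 : x ∈ B'.1 := by
      rw [hGeq B']
      exact ⟨x, hx.1, hslerefl x⟩
    have hx2 : x ∈ ucl (↑(G B) : Set P) := by
      rw [← hGeq B]
      exact hsub hx1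
    obtain ⟨f, hf, hfx⟩ := hx2
    have hfle := (sle_iff hscott).1 hfx
    exact ⟨f, ⟨hf, fun hfU => hx.2 (hupper hfle hfU)⟩, hfle⟩
  set S : Set (Set (ℱ × P)) := {R | (∀ p ∈ R, p.2 ∈ H p.1) ∧ (∀ B : ℱ, ∃ x, (B, x) ∈ R) ∧
    ∀ B B' : ℱ, B'.1 ⊆ B.1 → ∀ x, (B', x) ∈ R → ∃ f, (B, f) ∈ R ∧ f ≤ x} with hS
  have hR₀ : {p : ℱ × P | p.2 ∈ H p.1} ∈ S := by
    refine ⟨fun p hp => hp, fun B => hHne B, ?_⟩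
    intro B B' hsub x hx
    obtain ⟨f, hf, hfx⟩ := hkey B B' hsub x hx
    exact ⟨f, hf, hfx⟩
  have hchain : ∀ c ⊆ S, IsChain (· ⊆ ·) c → c.Nonempty →
      ∃ lb ∈ S, ∀ s ∈ c, lb ⊆ s := by
    intro c hcS hchain hcne
    have hleast : ∀ B : ℱ, ∃ R₀ ∈ c, ∀ R ∈ c, ∀ x : P, (B, x) ∈ R₀ → (B, x) ∈ R := by
      intro B
      set T : Set (Set P) := (fun R : Set (ℱ × P) => {x | (B, x) ∈ R}) '' c with hT
      have hTfin : T.Finite := by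
        refine Set.Finite.subset (Set.Finite.finite_subsets ((G B).finite_toSet.diff (t := U))) ?_
        rintro t ⟨R, hRc, rfl⟩
        exact fun x hx => (hcS hRc).1 (B, x) hx
      have hTne : T.Nonempty := hcne.image _
      obtain ⟨t, htT, htmin⟩ := Set.Finite.exists_minimalFor id T hTfin hTne
      have hleast' : ∀ t' ∈ T, t ⊆ t' := by
        intro t' ht'
        obtain ⟨R1, hR1, ht1⟩ := htT
        obtain ⟨R2, hR2, ht2⟩ := ht'
        rcases eq_or_ne R1 R2 with rfl | hR12
        · rw [← ht1, ← ht2]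
        · rcases hchain hR1 hR2 hR12 with hsub | hsub
          · rw [← ht1, ← ht2]
            exact fun x hx => hsub hx
          · have ht't : t' ⊆ t := by
              rw [← ht1, ← ht2]
              exact fun x hx => hsub hx
            exact htmin ⟨R2, hR2, ht2⟩ ht't
      obtain ⟨R₀, hR₀c, ht0⟩ := htT
      refine ⟨R₀, hR₀c, fun R hR x hx => ?_⟩
      exact hleast' _ ⟨R, hR, rfl⟩ (ht0 ▸ hx : x ∈ t)
    refine ⟨⋂₀ c, ⟨?_, ?_, ?_⟩, fun s hs => Set.sInter_subset_of_mem hs⟩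
    · intro p hp
      obtain ⟨R, hR⟩ := hcne
      exact (hcS hR).1 p (Set.mem_sInter.1 hp R hR)
    · intro B
      obtain ⟨R₀, hR₀c, hsec⟩ := hleast B
      obtain ⟨x, hx⟩ := (hcS hR₀c).2.1 B
      exact ⟨x, Set.mem_sInter.2 fun R hR => hsec R hR x hx⟩
    · intro B B' hsub x hx
      obtain ⟨R₀, hR₀c, hsec⟩ := hleast B
      obtain ⟨f, hf, hfx⟩ := (hcS hR₀c).2.2 B B' hsub x (Set.mem_sInter.1 hx R₀ hR₀c)
      exact ⟨f, Set.mem_sInter.2 fun R hR => hsec R hR f hf, hfx⟩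
  obtain ⟨M, -, hM⟩ := zorn_superset_nonempty S hchain _ hR₀
  have hMS : M ∈ S := hM.1
  have hdag : ∀ (B₀ : ℱ) (x : P), (B₀, x) ∈ M → ∃ C : ℱ, ∀ z, (C, z) ∈ M → x ≤ z := by
    intro B₀ x hx
    by_contra hcon2
    push_neg at hcon2
    have hR' : {p | p ∈ M ∧ ¬ x ≤ p.2} ∈ S := by
      refine ⟨fun p hp => hMS.1 p hp.1, ?_, ?_⟩
      · intro B
        obtain ⟨z, hz, hxz⟩ := hcon2 B
        exact ⟨z, hz, hxz⟩
      · intro B B' hsub w hw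
        obtain ⟨f, hf, hfw⟩ := hMS.2.2 B B' hsub w hw.1
        exact ⟨f, ⟨hf, fun hxf => hw.2 (hxf.trans hfw)⟩, hfw⟩
    have hsubM : {p : ℱ × P | p ∈ M ∧ ¬ x ≤ p.2} ⊆ M := fun p hp => hp.1
    exact (hM.2 hR' hsubM hx).2 le_rfl
  obtain ⟨B₀', hB₀'⟩ := hF.2.1
  set D : Set P := {x | ∃ B : ℱ, (B, x) ∈ M} with hD
  have hDne : D.Nonempty := by
    obtain ⟨x, hx⟩ := hMS.2.1 ⟨B₀', hB₀'⟩
    exact ⟨x, ⟨B₀', hB₀'⟩, hx⟩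
  have hDdir : DirectedOn (· ≤ ·) D := by
    rintro x ⟨B₁, hx⟩ y ⟨B₂, hy⟩
    obtain ⟨C₁, hC₁⟩ := hdag B₁ x hx
    obtain ⟨C₂, hC₂⟩ := hdag B₂ y hy
    obtain ⟨C₃, hC₃ℱ, h31, h32⟩ := hF.2.2 C₁.1 C₁.2 C₂.1 C₂.2
    obtain ⟨z, hz⟩ := hMS.2.1 ⟨C₃, hC₃ℱ⟩
    obtain ⟨f₁, hf₁, hf₁z⟩ := hMS.2.2 C₁ ⟨C₃, hC₃ℱ⟩ h31 z hz
    obtain ⟨f₂, hf₂, hf₂z⟩ := hMS.2.2 C₂ ⟨C₃, hC₃ℱ⟩ h32 z hz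
    exact ⟨z, ⟨⟨C₃, hC₃ℱ⟩, hz⟩, (hC₁ f₁ hf₁).trans hf₁z, (hC₂ f₂ hf₂).trans hf₂z⟩
  obtain ⟨d, hd⟩ := hdcpo D hDne hDdir
  have hdmem : ∀ B : ℱ, d ∈ B.1 := by
    intro B
    obtain ⟨x, hx⟩ := hMS.2.1 B
    have hxH := hMS.1 _ hx
    rw [hGeq B]
    exact ⟨x, hxH.1, (sle_iff hscott).2 (hd.1 ⟨B, hx⟩)⟩
  have hdU : d ∈ U := h (Set.mem_sInter.2 fun B hB => hdmem ⟨B, hB⟩)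
  obtain ⟨e, heD, heU⟩ := ((hscott U).1 hU).2 D hDne hDdir d hd hdU
  obtain ⟨B, hB⟩ := heD
  exact (hMS.1 _ hB).2 heU

end AuxLemmas

/-- in a continuous domain with the Scott topology, a directed
family `ℱ ⊆ UX` converges `ℱ ⇒_U ↑F` iff `⋂ℱ ⊆ ↑F`. -/
theorem stmt_15 {P : Type*} [PartialOrder P] [TopologicalSpace P]
    (hscott : ∀ U : Set P, IsOpen U ↔ ScottOpens U)
    (hcont : IsContinuousDomain P) :
    ∀ (ℱ : Set (Set P)) (F : Finset P), UDir ℱ → F.Nonempty →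
      (UConv ℱ (ucl (F : Set P)) ↔ ⋂₀ ℱ ⊆ ucl (F : Set P)) := by
  intro ℱ F hUdir hFne
  have hdcpo := hcont.1
  constructor
  · rintro ⟨-, F', hF'ne, hEq, n, Dn, h1, h2, h3⟩ x hx
    by_contra hxF
    rw [hEq] at hxF
    have key : ∀ i, ∃ di, di ∈ Dn i ∧ ¬ di ≤ x := by
      intro i
      obtain ⟨a, haF', hc⟩ := h1 i
      have hax : ¬ a ≤ x := fun hax => hxF ⟨a, haF', (sle_iff hscott).2 hax⟩
      obtain ⟨d, hdD, hd⟩ := hc.2 _ ((hscott _).2 (notLe_scottOpens x)) hax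
      exact ⟨d, hdD, hd d hdD (subset_closure rfl)⟩
    choose dn hdn hdx using key
    obtain ⟨B, hB, hBsub⟩ := h3 dn hdn
    obtain ⟨i, hi⟩ := Set.mem_iUnion.1 (hBsub (hx B hB))
    obtain ⟨a, ha, hax⟩ := hi
    rw [Set.mem_singleton_iff] at ha
    exact hdx i (ha ▸ (sle_iff hscott).1 hax)
  · intro h
    refine ⟨hUdir, F, hFne, rfl, F.card,
      fun i => {y | wayBelow y ((F.equivFin.symm i : P))}, ?_, ?_, ?_⟩
    · intro i
      exact ⟨_, (F.equivFin.symm i).2, dconv_waybelow hscott hcont _⟩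
    · intro b hb
      refine ⟨F.equivFin ⟨b, hb⟩, ?_⟩
      have hsimp : ((F.equivFin.symm (F.equivFin ⟨b, hb⟩)) : P) = b := by
        rw [Equiv.symm_apply_apply]
      show DConv {y : P | wayBelow y ((F.equivFin.symm (F.equivFin ⟨b, hb⟩)) : P)} b
      rw [hsimp]
      exact dconv_waybelow hscott hcont b
    · intro dn hdn
      have hUo : IsOpen (⋃ i, {z | wayBelow (dn i) z}) :=
        isOpen_iUnion fun i => (hscott _).2 (upup_scottOpens hcont (dn i))
      have hsub : ⋂₀ ℱ ⊆ ⋃ i, {z | wayBelow (dn i) z} := by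
        intro x hx
        obtain ⟨b, hb, hbx⟩ := h hx
        refine Set.mem_iUnion.2 ⟨F.equivFin ⟨b, hb⟩, ?_⟩
        have hbx' : b ≤ x := (sle_iff hscott).1 hbx
        have hdb : wayBelow (dn (F.equivFin ⟨b, hb⟩))
            ((F.equivFin.symm (F.equivFin ⟨b, hb⟩)) : P) := hdn (F.equivFin ⟨b, hb⟩)
        have hsimp : ((F.equivFin.symm (F.equivFin ⟨b, hb⟩)) : P) = b := by
          rw [Equiv.symm_apply_apply]
        rw [hsimp] at hdb
        exact wayBelow_mono le_rfl hdb hbx'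
      obtain ⟨B, hB, hBU⟩ := rudin hscott hdcpo ℱ hUdir hUo hsub
      refine ⟨B, hB, hBU.trans ?_⟩
      intro z hz
      obtain ⟨i, hi⟩ := Set.mem_iUnion.1 hz
      exact Set.mem_iUnion.2 ⟨i, dn i, rfl, (sle_iff hscott).2 (wayBelow_le' hi)⟩
end

section
/- Let X be a directed space and PX = {(↓F, ↑F) : F nonempty finite ⊆ X} with the order (↓F₁, ↑F₁) ≤_P (↓F₂, ↑F₂) iff ↓F₁ ⊆ ↓F₂ and ↑F₂ ⊆ ↑F₁ (the Egli–Milner order). Then the operation F̂₁ ⊕ F̂₂ = (↓(F₁∪F₂), ↑(F₁∪F₂)) is well-defined on PX (independent of the choice of representatives F) and is idempotent, associative, and commutative with respect to ≤_P. -/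
variable {X : Type*}

lemma dcl_union [TopologicalSpace X] (A B : Set X) :
    dcl (A ∪ B) = dcl A ∪ dcl B := by
  ext x
  simp only [dcl, Set.mem_union, Set.mem_setOf_eq]
  constructor
  · rintro ⟨a, (h | h), hs⟩
    exacts [Or.inl ⟨a, h, hs⟩, Or.inr ⟨a, h, hs⟩]
  · rintro (⟨a, h, hs⟩ | ⟨a, h, hs⟩)
    exacts [⟨a, Or.inl h, hs⟩, ⟨a, Or.inr h, hs⟩]

lemma ucl_union [TopologicalSpace X] (A B : Set X) :
    ucl (A ∪ B) = ucl A ∪ ucl B := by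
  ext x
  simp only [ucl, Set.mem_union, Set.mem_setOf_eq]
  constructor
  · rintro ⟨a, (h | h), hs⟩
    exacts [Or.inl ⟨a, h, hs⟩, Or.inr ⟨a, h, hs⟩]
  · rintro (⟨a, h, hs⟩ | ⟨a, h, hs⟩)
    exacts [⟨a, Or.inl h, hs⟩, ⟨a, Or.inr h, hs⟩]

/-- on `PX = {(↓F, ↑F)}` with the Egli–Milner order, the
operation `F̂₁ ⊕ F̂₂ = (↓(F₁∪F₂), ↑(F₁∪F₂))` is well-defined (independent of the
representatives), idempotent, associative and commutative. -/
theorem stmt_19 [TopologicalSpace X] [T0Space X] (hX : IsDirectedSpace X) :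
    (∀ F₁ F₂ G₁ G₂ : Finset X, F₁.Nonempty → F₂.Nonempty → G₁.Nonempty → G₂.Nonempty →
        dcl (F₁ : Set X) = dcl (F₂ : Set X) → ucl (F₁ : Set X) = ucl (F₂ : Set X) →
        dcl (G₁ : Set X) = dcl (G₂ : Set X) → ucl (G₁ : Set X) = ucl (G₂ : Set X) →
        dcl ((F₁ : Set X) ∪ (G₁ : Set X)) = dcl ((F₂ : Set X) ∪ (G₂ : Set X)) ∧
        ucl ((F₁ : Set X) ∪ (G₁ : Set X)) = ucl ((F₂ : Set X) ∪ (G₂ : Set X))) ∧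
    (∀ F : Finset X, F.Nonempty →
        dcl ((F : Set X) ∪ (F : Set X)) = dcl (F : Set X) ∧
        ucl ((F : Set X) ∪ (F : Set X)) = ucl (F : Set X)) ∧
    (∀ F G H : Finset X, F.Nonempty → G.Nonempty → H.Nonempty →
        dcl (((F : Set X) ∪ (G : Set X)) ∪ (H : Set X)) =
          dcl ((F : Set X) ∪ ((G : Set X) ∪ (H : Set X))) ∧
        ucl (((F : Set X) ∪ (G : Set X)) ∪ (H : Set X)) =
          ucl ((F : Set X) ∪ ((G : Set X) ∪ (H : Set X)))) ∧
    (∀ F G : Finset X, F.Nonempty → G.Nonempty →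
        dcl ((F : Set X) ∪ (G : Set X)) = dcl ((G : Set X) ∪ (F : Set X)) ∧
        ucl ((F : Set X) ∪ (G : Set X)) = ucl ((G : Set X) ∪ (F : Set X))) := by
  refine ⟨?_, ?_, ?_, ?_⟩
  · intro F₁ F₂ G₁ G₂ _ _ _ _ hd hu hd' hu'
    constructor <;> simp [dcl_union, ucl_union, hd, hu, hd', hu']
  · intro F _; simp [dcl_union, ucl_union]
  · intro F G H _ _ _; simp [dcl_union, ucl_union, Set.union_assoc]
  · intro F G _ _
    constructor <;> simp [dcl_union, ucl_union, Set.union_comm]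
end
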